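/- Let K, φ, α > 0 and suppose Q̄ > R_max > 0 satisfy the implicit relation 2Q̄³ − 3Q̄²·R_max + R_max³ = ((φ/K)·Q̄² + (α/K)·Q̄³)·R_max³. Then along this relation dR_max/dQ̄ > 0; that is, R_max is a strictly increasing function of Q̄. -/

import Mathlib

theorem stmt11 (K φ α : ℝ) (hK : 0 < K) (hφ : 0 < φ) (hα : 0 < α)
    (R : ℝ → ℝ) (Q : ℝ) (hQ : 0 < Q) (hRpos : 0 < R Q) (hlt : R Q < Q)
    (hrel : ∀ᶠ q in nhds Q,
      2 * q ^ 3 - 3 * q ^ 2 * R q + (R q) ^ 3 =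
        (φ / K * q ^ 2 + α / K * q ^ 3) * (R q) ^ 3)
    (d : ℝ) (hd : HasDerivAt R d Q) : 0 < d := by
  have hr := hrel.self_of_nhds
  set r := R Q with hrdef
  set a := φ / K with hadef
  set b := α / K with hbdef
  have ha : 0 < a := div_pos hφ hK
  have hb : 0 < b := div_pos hα hK
  have hq3 : HasDerivAt (fun q : ℝ => q ^ 3) (3 * Q ^ 2) Q := by
    simpa using hasDerivAt_pow 3 Q
  have hq2 : HasDerivAt (fun q : ℝ => q ^ 2) (2 * Q) Q := by
    simpa using hasDerivAt_pow 2 Q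
  have hR3 : HasDerivAt (fun q => (R q) ^ 3) (3 * r ^ 2 * d) Q := by
    simpa [hrdef, mul_comm, mul_assoc] using hd.fun_pow 3
  have hA : HasDerivAt (fun q : ℝ => 2 * q ^ 3) (2 * (3 * Q ^ 2)) Q := hq3.const_mul 2
  have hB : HasDerivAt (fun q : ℝ => 3 * q ^ 2 * R q)
      (3 * (2 * Q) * r + 3 * Q ^ 2 * d) Q := (hq2.const_mul 3).mul hd
  have hc : HasDerivAt (fun q : ℝ => a * q ^ 2 + b * q ^ 3)
      (a * (2 * Q) + b * (3 * Q ^ 2)) Q := (hq2.const_mul a).add (hq3.const_mul b)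
  have hD : HasDerivAt (fun q : ℝ => (a * q ^ 2 + b * q ^ 3) * (R q) ^ 3)
      ((a * (2 * Q) + b * (3 * Q ^ 2)) * r ^ 3 +
        (a * Q ^ 2 + b * Q ^ 3) * (3 * r ^ 2 * d)) Q := hc.mul hR3
  have htot : HasDerivAt
      (fun q : ℝ => 2 * q ^ 3 - 3 * q ^ 2 * R q + (R q) ^ 3 -
        (a * q ^ 2 + b * q ^ 3) * (R q) ^ 3)
      (2 * (3 * Q ^ 2) - (3 * (2 * Q) * r + 3 * Q ^ 2 * d) + 3 * r ^ 2 * d -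
        ((a * (2 * Q) + b * (3 * Q ^ 2)) * r ^ 3 +
          (a * Q ^ 2 + b * Q ^ 3) * (3 * r ^ 2 * d))) Q :=
    ((hA.sub hB).add hR3).sub hD
  have h0 : HasDerivAt
      (fun q : ℝ => 2 * q ^ 3 - 3 * q ^ 2 * R q + (R q) ^ 3 -
        (a * q ^ 2 + b * q ^ 3) * (R q) ^ 3) 0 Q := by
    refine (hasDerivAt_const Q (0 : ℝ)).congr_of_eventuallyEq ?_
    filter_upwards [hrel] with q hq
    rw [hq]; ring
  have key := htot.unique h0
  -- relation at Q
  have h1 : a * Q ^ 2 * r ^ 3 + b * Q ^ 3 * r ^ 3 = 2 * Q ^ 3 - 3 * Q ^ 2 * r + r ^ 3 := by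
    linear_combination -hr
  have hK1 : 0 < 3 * Q ^ 2 - 3 * r ^ 2 + 3 * r ^ 2 * (a * Q ^ 2 + b * Q ^ 3) := by
    have h2 : r ^ 2 < Q ^ 2 := by nlinarith
    have h3 : 0 < 3 * r ^ 2 * (a * Q ^ 2 + b * Q ^ 3) := by positivity
    nlinarith
  have hK2 : 0 < 6 * Q ^ 2 - 6 * Q * r - (2 * a * Q + 3 * b * Q ^ 2) * r ^ 3 := by
    have hQK2 : 0 < Q * (6 * Q ^ 2 - 6 * Q * r - (2 * a * Q + 3 * b * Q ^ 2) * r ^ 3) := by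
      have : Q * (6 * Q ^ 2 - 6 * Q * r - (2 * a * Q + 3 * b * Q ^ 2) * r ^ 3)
          = a * Q ^ 2 * r ^ 3 + 3 * r * (Q ^ 2 - r ^ 2) := by
        linear_combination (-3 : ℝ) * h1
      rw [this]
      have h2 : r ^ 2 < Q ^ 2 := by nlinarith
      have h3 : 0 < a * Q ^ 2 * r ^ 3 := by positivity
      nlinarith
    nlinarith
  have hkey : (3 * Q ^ 2 - 3 * r ^ 2 + 3 * r ^ 2 * (a * Q ^ 2 + b * Q ^ 3)) * d
      = 6 * Q ^ 2 - 6 * Q * r - (2 * a * Q + 3 * b * Q ^ 2) * r ^ 3 := by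
    linear_combination -key
  nlinarith [mul_pos hK1 hK2]
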